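/- arXiv:2409.07580 — 2 statements merged into one kernel-verified Lean document; each statement's English description precedes it below -/
import Mathlib

section
/- Fix s ∈ F_2^n with Hamming weight t ≥ 1. For each subset description, let D_0^s be the uniform distribution on matrices G ∈ F_2^{n×m} conditioned on s^T G = 0, let D_1^s be the distribution obtained by sampling v ~ Ber(m, ε) and then G uniform subject to s^T G = v, and let D_2^s be the distribution obtained by sampling i uniform in [n], v ~ Ber(m, ε), G ← D_0^s, and replacing row G_i with G_i ⊕ v. Then D_2^s = (t/n)·D_1^s + (1 − t/n)·D_0^s as distributions. -/
lemma vecMul_updateRow_add' {n m : ℕ} (s : Fin n → ZMod 2) (G : Matrix (Fin n) (Fin m) (ZMod 2))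
    (i : Fin n) (v : Fin m → ZMod 2) :
    Matrix.vecMul s (Matrix.updateRow G i (G i + v)) = Matrix.vecMul s G + (s i) • v := by
  funext j
  simp only [Matrix.vecMul, dotProduct, Pi.add_apply, Pi.smul_apply, smul_eq_mul]
  rw [← Finset.sum_erase_add _ _ (Finset.mem_univ i),
      ← Finset.sum_erase_add _ (fun x => s x * G x j) (Finset.mem_univ i)]
  have h1 : ∀ x ∈ Finset.univ.erase i,
      s x * Matrix.updateRow G i (G i + v) x j = s x * G x j := by
    intro x hx
    rw [Matrix.updateRow_apply, if_neg (Finset.mem_erase.mp hx).1]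
  rw [Finset.sum_congr rfl h1, Matrix.updateRow_apply, if_pos rfl]
  simp [Pi.add_apply]; ring

lemma zmod2_add_eq_zero' {m : ℕ} (a b : Fin m → ZMod 2) : a + b = 0 ↔ a = b := by
  constructor
  · intro h; funext j
    exact (by decide : ∀ x y : ZMod 2, x + y = 0 → x = y) _ _ (congrFun h j)
  · rintro rfl; funext j
    exact (by decide : ∀ x : ZMod 2, x + x = 0) _

lemma upd_invol' {n m : ℕ} (G : Matrix (Fin n) (Fin m) (ZMod 2)) (i : Fin n)
    (v : Fin m → ZMod 2) :
    Matrix.updateRow (Matrix.updateRow G i (G i + v)) i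
      ((Matrix.updateRow G i (G i + v)) i + v) = G := by
  funext x j
  rcases eq_or_ne x i with rfl | hx
  · rw [Matrix.updateRow_self, Matrix.updateRow_self]
    show (G x j + v j) + v j = G x j
    rw [add_assoc, (by decide : ∀ x : ZMod 2, x + x = 0) (v j), add_zero]
  · rw [Matrix.updateRow_ne hx, Matrix.updateRow_ne hx]


/-- Decomposition of the row-perturbed planted-XOR distribution.  Fix `s` of
Hamming weight `t ≥ 1`.  `D0` is uniform on matrices `G` with `sᵀG = 0`; `D1`
samples `v ~ Ber(m, ε)` and then `G` uniform with `sᵀG = v`; `D2` samples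
`i ← [n]`, `v ~ Ber(m, ε)`, `G ← D0` and replaces row `i` of `G` by `G_i ⊕ v`
(expressed below via the involution `G ↦ updateRow G i (G i + v)`).  Then
`D2 = (t/n)·D1 + (1 - t/n)·D0`. -/
theorem planted_xor_mixture (n m t : ℕ) (ε : ℝ) (hε0 : 0 ≤ ε) (hε1 : ε ≤ 1)
    (ht1 : 1 ≤ t) (htn : t ≤ n) (s : Fin n → ZMod 2)
    (hs : (Finset.univ.filter (fun i => s i = 1)).card = t)
    (D0 D1 D2 : Matrix (Fin n) (Fin m) (ZMod 2) → ℝ)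
    (hD0 : D0 = fun G => if Matrix.vecMul s G = 0 then
        1 / ((Finset.univ.filter
          (fun G' : Matrix (Fin n) (Fin m) (ZMod 2) => Matrix.vecMul s G' = 0)).card : ℝ)
      else 0)
    (hD1 : D1 = fun G => ∑ v : Fin m → ZMod 2,
        (∏ j, if v j = 1 then ε else 1 - ε) *
          (if Matrix.vecMul s G = v then
            1 / ((Finset.univ.filter
              (fun G' : Matrix (Fin n) (Fin m) (ZMod 2) => Matrix.vecMul s G' = v)).card : ℝ)
          else 0))
    (hD2 : D2 = fun G => (1/(n : ℝ)) * ∑ i : Fin n, ∑ v : Fin m → ZMod 2,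
        (∏ j, if v j = 1 then ε else 1 - ε) * D0 (Matrix.updateRow G i (G i + v))) :
    D2 = fun G => ((t : ℝ)/n) * D1 G + (1 - (t : ℝ)/n) * D0 G := by
  -- notation
  set N : ℕ := (Finset.univ.filter
      (fun G' : Matrix (Fin n) (Fin m) (ZMod 2) => Matrix.vecMul s G' = 0)).card with hN
  set W : (Fin m → ZMod 2) → ℝ := fun v => ∏ j, if v j = 1 then ε else 1 - ε with hW
  -- there is an index with s i0 = 1
  obtain ⟨i0, hi0⟩ : ∃ i0, s i0 = 1 := by
    have : (Finset.univ.filter (fun i => s i = 1)).Nonempty := by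
      rw [← Finset.card_pos, hs]; omega
    obtain ⟨i0, hi0⟩ := this
    exact ⟨i0, (Finset.mem_filter.mp hi0).2⟩
  -- all fibers have the same cardinality
  have cardv : ∀ v : Fin m → ZMod 2, (Finset.univ.filter
      (fun G' : Matrix (Fin n) (Fin m) (ZMod 2) => Matrix.vecMul s G' = v)).card = N := by
    intro v
    rw [hN]
    refine Finset.card_bij' (fun G _ => Matrix.updateRow G i0 (G i0 + v))
      (fun G _ => Matrix.updateRow G i0 (G i0 + v)) ?_ ?_ ?_ ?_
    · intro G hG
      rw [Finset.mem_filter] at hG ⊢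
      refine ⟨Finset.mem_univ _, ?_⟩
      rw [vecMul_updateRow_add', hG.2, hi0, one_smul, (zmod2_add_eq_zero' v v).mpr rfl]
    · intro G hG
      rw [Finset.mem_filter] at hG ⊢
      refine ⟨Finset.mem_univ _, ?_⟩
      rw [vecMul_updateRow_add', hG.2, hi0, one_smul, zero_add]
    · intro G _; exact upd_invol' G i0 v
    · intro G _; exact upd_invol' G i0 v
  -- sum of weights is 1
  have hsum1 : ∑ v : Fin m → ZMod 2, W v = 1 := by
    have hpf := Finset.sum_prod_piFinset (ι := Fin m)
      (Finset.univ : Finset (ZMod 2)) (fun j x => if x = 1 then ε else 1 - ε)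
    rw [Fintype.piFinset_univ] at hpf
    rw [hW, hpf]
    have h1 : ∀ j : Fin m, ∑ x : ZMod 2, (if x = 1 then ε else 1 - ε) = 1 := by
      intro j
      rw [Finset.sum_eq_add (0 : ZMod 2) 1 (by decide)
        (by intro x _ hx; fin_cases x; exacts [absurd rfl hx.1, absurd rfl hx.2]) (by simp) (by simp)]
      norm_num
    rw [Finset.prod_congr rfl (fun j _ => h1 j), Finset.prod_const_one]
  -- closed form of D1
  have hD1' : ∀ G, D1 G = ∑ v : Fin m → ZMod 2,
      W v * (if Matrix.vecMul s G = v then 1 / (N : ℝ) else 0) := by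
    intro G
    rw [hD1]
    refine Finset.sum_congr rfl (fun v _ => ?_)
    rw [cardv v]
  subst hD0 hD2
  funext G
  simp only
  -- compute the inner summand
  have key : ∀ (i : Fin n) (v : Fin m → ZMod 2),
      (if Matrix.vecMul s (Matrix.updateRow G i (G i + v)) = 0 then 1 / (N : ℝ) else 0)
        = if s i = 1 then (if Matrix.vecMul s G = v then 1 / (N : ℝ) else 0)
          else (if Matrix.vecMul s G = 0 then 1 / (N : ℝ) else 0) := by
    intro i v
    rw [vecMul_updateRow_add']
    rcases (by decide : ∀ a : ZMod 2, a = 0 ∨ a = 1) (s i) with h | h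
    · rw [h, zero_smul, add_zero, if_neg (show ¬ (0:ZMod 2) = 1 by decide)]
    · rw [h, one_smul, if_pos rfl]
      congr 1
      simp only [eq_iff_iff]
      exact zmod2_add_eq_zero' _ _
  have hinner : ∀ i : Fin n,
      (∑ v : Fin m → ZMod 2, W v *
        (if Matrix.vecMul s (Matrix.updateRow G i (G i + v)) = 0 then 1 / (N : ℝ) else 0))
      = if s i = 1 then D1 G
          else (if Matrix.vecMul s G = 0 then 1 / (N : ℝ) else 0) := by
    intro i
    rcases eq_or_ne (s i) 1 with h | h
    · rw [if_pos h, hD1' G]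
      refine Finset.sum_congr rfl (fun v _ => ?_)
      rw [key i v, if_pos h]
    · rw [if_neg h]
      have : ∀ v ∈ (Finset.univ : Finset (Fin m → ZMod 2)), W v *
          (if Matrix.vecMul s (Matrix.updateRow G i (G i + v)) = 0 then 1 / (N : ℝ) else 0)
          = W v * (if Matrix.vecMul s G = 0 then 1 / (N : ℝ) else 0) := by
        intro v _
        rw [key i v, if_neg h]
      rw [Finset.sum_congr rfl this, ← Finset.sum_mul, hsum1, one_mul]
  rw [Finset.sum_congr rfl (fun i _ => hinner i)]
  rw [Finset.sum_ite, Finset.sum_const, Finset.sum_const, hs]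
  have hcard2 : (Finset.univ.filter (fun i : Fin n => ¬ s i = 1)).card = n - t := by
    have := Finset.card_filter_add_card_filter_not
      (s := (Finset.univ : Finset (Fin n))) (p := fun i => s i = 1)
    rw [hs, Finset.card_univ, Fintype.card_fin] at this
    omega
  rw [hcard2]
  have hn0 : (n : ℝ) ≠ 0 := by
    have : 1 ≤ n := le_trans ht1 htn
    positivity
  have hnt : ((n - t : ℕ) : ℝ) = (n : ℝ) - t := by
    rw [Nat.cast_sub htn]
  rw [nsmul_eq_mul, nsmul_eq_mul, hnt]
  field_simp
end

section
/- Let a ∈ {0,1}^n be a string with |#{i : a_i = 1} − #{i : a_i = 0}| ≤ n^{0.6}·2 (i.e., a is (1/n^{0.4})-biased, so r = #{i : a_i = 1} satisfies n/2 − n^{0.6} ≤ r ≤ n/2 + n^{0.6}), let b ∈ {0,1}, let c > 0 be a constant, and let s be drawn uniformly at random from the set of vectors in {0,1}^n of Hamming weight exactly ⌈c log n⌉. Then Pr_s[a · s = b] ≤ 1/2 + negl(n), where negl(n) denotes a function that is eventually smaller than any inverse polynomial. -/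
open Finset Polynomial

lemma zmod2_cases (x : ZMod 2) : x = 0 ∨ x = 1 := by revert x; decide

lemma sum_weight (n ℓ : ℕ) {M : Type*} [AddCommMonoid M] (f : Finset (Fin n) → M) :
    ∑ s ∈ Finset.univ.filter (fun s : Fin n → ZMod 2 =>
        (Finset.univ.filter (fun i => s i = 1)).card = ℓ),
      f (Finset.univ.filter (fun i => s i = 1))
    = ∑ S ∈ Finset.powersetCard ℓ (Finset.univ : Finset (Fin n)), f S := by
  refine Finset.sum_bij' (fun s _ => Finset.univ.filter (fun i => s i = 1))
    (fun S _ => fun i => if i ∈ S then (1 : ZMod 2) else 0) ?_ ?_ ?_ ?_ ?_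
  · intro s hs
    simp only [Finset.mem_filter, Finset.mem_univ, true_and] at hs
    simp [Finset.mem_powersetCard, hs]
  · intro S hS
    simp only [Finset.mem_powersetCard] at hS
    simp only [Finset.mem_filter, Finset.mem_univ, true_and]
    rw [show (Finset.univ.filter fun i => (if i ∈ S then (1:ZMod 2) else 0) = 1) = S by
      ext i; simp only [Finset.mem_filter, Finset.mem_univ, true_and]
      by_cases h : i ∈ S <;> simp [h]]
    exact hS.2
  · intro s hs
    funext i
    simp only [Finset.mem_filter, Finset.mem_univ, true_and]
    rcases zmod2_cases (s i) with h | h <;> simp [h]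
  · intro S hS
    ext i; simp only [Finset.mem_filter, Finset.mem_univ, true_and]
    by_cases h : i ∈ S <;> simp [h]
  · intro s hs; rfl

lemma parity_split {n : ℕ} (p : Fin n → Prop) [DecidablePred p] (ℓ : ℕ) (b : ZMod 2) :
    2 * (((Finset.powersetCard ℓ (univ : Finset (Fin n))).filter
        (fun S => ((S.filter p).card : ZMod 2) = b)).card : ℤ)
      ≤ (n.choose ℓ : ℤ) + |∑ S ∈ Finset.powersetCard ℓ (univ : Finset (Fin n)),
          (-1:ℤ)^(S.filter p).card| := by
  set T := Finset.powersetCard ℓ (univ : Finset (Fin n)) with hT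
  have hcard : (T.filter (fun S => ((S.filter p).card : ZMod 2) = 0)).card
      + (T.filter (fun S => ((S.filter p).card : ZMod 2) = 1)).card = n.choose ℓ := by
    have hfc : T.filter (fun S => ((S.filter p).card : ZMod 2) = 1)
        = T.filter (fun S => ¬ (((S.filter p).card : ZMod 2) = 0)) := by
      apply Finset.filter_congr
      intro S _
      rcases zmod2_cases (((S.filter p).card : ZMod 2)) with h | h <;> simp [h]
    rw [hfc, Finset.card_filter_add_card_filter_not, hT, Finset.card_powersetCard,
      Finset.card_univ, Fintype.card_fin]
  have heven : ∀ S : Finset (Fin n), (((S.filter p).card : ZMod 2) = 0) ↔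
      Even (S.filter p).card := by
    intro S
    rw [ZMod.natCast_eq_zero_iff, Nat.even_iff, Nat.dvd_iff_mod_eq_zero]
  have hD : ∑ S ∈ T, (-1:ℤ)^(S.filter p).card
      = ((T.filter (fun S => ((S.filter p).card : ZMod 2) = 0)).card : ℤ)
      - ((T.filter (fun S => ((S.filter p).card : ZMod 2) = 1)).card : ℤ) := by
    rw [← Finset.sum_filter_add_sum_filter_not T (fun S => ((S.filter p).card : ZMod 2) = 0)]
    have h1 : ∑ S ∈ T.filter (fun S => ((S.filter p).card : ZMod 2) = 0),
        (-1:ℤ)^(S.filter p).card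
        = ((T.filter (fun S => ((S.filter p).card : ZMod 2) = 0)).card : ℤ) := by
      rw [Finset.sum_congr rfl (fun S hS => ?_), Finset.sum_const, nsmul_eq_mul, mul_one]
      exact Even.neg_one_pow ((heven S).mp (Finset.mem_filter.mp hS).2)
    have h2 : ∑ S ∈ T.filter (fun S => ¬ ((S.filter p).card : ZMod 2) = 0),
        (-1:ℤ)^(S.filter p).card
        = -((T.filter (fun S => ((S.filter p).card : ZMod 2) = 1)).card : ℤ) := by
      have : (T.filter (fun S => ¬ ((S.filter p).card : ZMod 2) = 0))
          = T.filter (fun S => ((S.filter p).card : ZMod 2) = 1) := by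
        apply Finset.filter_congr
        intro S _
        rcases zmod2_cases (((S.filter p).card : ZMod 2)) with h | h <;> simp [h]
      rw [this, Finset.sum_congr rfl (fun S hS => ?_), Finset.sum_const, nsmul_eq_mul, mul_neg_one]
      have hodd : ¬ Even (S.filter p).card := by
        rw [← heven]
        rcases zmod2_cases (((S.filter p).card : ZMod 2)) with h | h
        · exact absurd ((Finset.mem_filter.mp hS).2) (by simp [h])
        · simp [h]
      exact Odd.neg_one_pow (Nat.not_even_iff_odd.mp hodd)
    rw [h1, h2]; ring
  rcases zmod2_cases b with hb | hb <;> subst hb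
  · have : ((T.filter (fun S => ((S.filter p).card : ZMod 2) = 0)).card : ℤ)
        - ((T.filter (fun S => ((S.filter p).card : ZMod 2) = 1)).card : ℤ)
        ≤ |∑ S ∈ T, (-1:ℤ)^(S.filter p).card| := by
      rw [← hD]; exact le_abs_self _
    have hc : ((T.filter (fun S => ((S.filter p).card : ZMod 2) = 0)).card : ℤ)
        + ((T.filter (fun S => ((S.filter p).card : ZMod 2) = 1)).card : ℤ)
        = (n.choose ℓ : ℤ) := by exact_mod_cast congrArg (Nat.cast : ℕ → ℤ) hcard
    linarith
  · have : -|∑ S ∈ T, (-1:ℤ)^(S.filter p).card|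
        ≤ ((T.filter (fun S => ((S.filter p).card : ZMod 2) = 0)).card : ℤ)
        - ((T.filter (fun S => ((S.filter p).card : ZMod 2) = 1)).card : ℤ) := by
      rw [← hD]; exact neg_abs_le _
    have hc : ((T.filter (fun S => ((S.filter p).card : ZMod 2) = 0)).card : ℤ)
        + ((T.filter (fun S => ((S.filter p).card : ZMod 2) = 1)).card : ℤ)
        = (n.choose ℓ : ℤ) := by exact_mod_cast congrArg (Nat.cast : ℕ → ℤ) hcard
    linarith

lemma D_eq {n : ℕ} (p : Fin n → Prop) [DecidablePred p] (ℓ : ℕ) (hℓ : ℓ ≤ n) :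
    ∑ S ∈ Finset.powersetCard ℓ (univ : Finset (Fin n)), (-1:ℤ)^(S.filter p).card
      = (((X - 1)^((univ : Finset (Fin n)).filter p).card
          * (X + 1)^(n - ((univ : Finset (Fin n)).filter p).card) : ℤ[X])).coeff (n - ℓ) := by
  set r := ((univ : Finset (Fin n)).filter p).card with hr
  have hcard : ((univ : Finset (Fin n)).card) = n := by simp
  have hk : n - ℓ ≤ (univ : Finset (Fin n)).card := by omega
  have hprod : (∏ i ∈ (univ : Finset (Fin n)),
      (X + C (if p i then (-1:ℤ) else 1))) = (X - 1)^r * (X + 1)^(n - r) := by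
    simp only [apply_ite (fun t : ℤ => (X + C t : ℤ[X]))]
    rw [Finset.prod_ite]
    simp only [Finset.prod_const]
    rw [← hr]
    have hnr : ((univ : Finset (Fin n)).filter (fun i => ¬ p i)).card = n - r := by
      have := Finset.card_filter_add_card_filter_not (s := (univ : Finset (Fin n))) (p := p)
      omega
    rw [hnr]
    norm_num [sub_eq_add_neg]
  rw [← hprod, Finset.prod_X_add_C_coeff _ _ (by omega : n - ℓ ≤ (univ : Finset (Fin n)).card)]
  rw [hcard, show n - (n - ℓ) = ℓ by omega]
  apply Finset.sum_congr rfl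
  intro S hS
  rw [Finset.prod_ite]
  simp [Finset.prod_const]

lemma abs_coeff_sq_sub_one_pow (m v : ℕ) :
    |((((X:ℤ[X])^2 - 1)^m).coeff v)| ≤ if 2 ∣ v then (m.choose (v/2) : ℤ) else 0 := by
  have hexp : (((X:ℤ[X])^2 - 1)^m) = ∑ j ∈ Finset.range (m+1),
      C ((-1:ℤ)^(m-j) * m.choose j) * X^(2*j) := by
    rw [sub_eq_add_neg, add_pow]
    apply Finset.sum_congr rfl
    intro j hj
    rw [pow_mul]
    simp only [C_mul, C_pow, C_neg, C_1, Polynomial.C_eq_natCast]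
    ring
  rw [hexp, finset_sum_coeff]
  simp only [coeff_C_mul_X_pow]
  by_cases hv : 2 ∣ v
  · obtain ⟨w, hw⟩ := hv
    have hconv : ∀ j ∈ Finset.range (m+1),
        (if v = 2*j then ((-1:ℤ)^(m-j) * m.choose j) else 0)
        = (if j = w then ((-1:ℤ)^(m-j) * m.choose j) else 0) := by
      intro j _; exact if_congr (by omega) rfl rfl
    rw [Finset.sum_congr rfl hconv, Finset.sum_ite_eq' (Finset.range (m+1))]
    have hw2 : v / 2 = w := by omega
    rw [if_pos (by omega : 2 ∣ v), hw2]
    by_cases hwm : w ∈ Finset.range (m+1)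
    · rw [if_pos hwm, abs_mul, abs_pow, abs_neg, abs_one, one_pow, one_mul]
      simp
    · rw [if_neg hwm]; positivity
  · rw [if_neg hv]
    have : ∀ j ∈ Finset.range (m+1),
        (if v = 2*j then ((-1:ℤ)^(m-j) * m.choose j) else 0) = 0 := by
      intro j _; rw [if_neg (by omega)]
    rw [Finset.sum_congr rfl this, Finset.sum_const_zero]
    simp

lemma abs_coeff_X_add_C_pow (σ : ℤ) (hσ : σ = 1 ∨ σ = -1) (d t : ℕ) :
    |(((X + C σ)^d : ℤ[X]).coeff t)| ≤ (d.choose t : ℤ) := by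
  rw [coeff_X_add_C_pow, abs_mul, abs_pow]
  rcases hσ with h | h <;> simp [h]

lemma term_bound (n ℓ m d : ℕ) (hnd : 2*m + d = n) (hℓ : ℓ ≤ n) (hn : 1 ≤ n)
    (hd : (d:ℝ) ≤ 2*(n:ℝ)^(0.6:ℝ)) (v t : ℕ) (hvt : v + t = n - ℓ) :
    (((if 2 ∣ v then (m.choose (v/2) : ℤ) else 0) * (d.choose t : ℤ) : ℤ) : ℝ)
      ≤ 2^ℓ * (n:ℝ)^(0.6*(ℓ:ℝ)) := by
  have hn0 : (0:ℝ) < (n:ℝ) := by exact_mod_cast (by omega : 0 < n)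
  have hpos : (0:ℝ) < 2^ℓ * (n:ℝ)^(0.6*(ℓ:ℝ)) := by positivity
  by_cases hv : 2 ∣ v
  · rw [if_pos hv]
    set j := v / 2 with hj
    by_cases hjm : j ≤ m
    · by_cases htd : t ≤ d
      · set i := m - j with hi
        set e := d - t with he
        have hie : 2*i + e = ℓ := by omega
        have hc1 : m.choose j ≤ n^i := by
          have h1 : m.choose j = m.choose i := by
            rw [hi, ← Nat.choose_symm hjm]
          calc m.choose j = m.choose i := h1
            _ ≤ m^i := Nat.choose_le_pow _ _
            _ ≤ n^i := Nat.pow_le_pow_left (by omega) _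
        have hc2 : d.choose t ≤ d^e := by
          have h1 : d.choose t = d.choose e := by
            rw [he, ← Nat.choose_symm htd]
          calc d.choose t = d.choose e := h1
            _ ≤ d^e := Nat.choose_le_pow _ _
        push_cast
        have hR : ((m.choose j : ℝ)) * (d.choose t : ℝ) ≤ (n:ℝ)^(i:ℕ) * (d:ℝ)^(e:ℕ) := by
          exact_mod_cast Nat.mul_le_mul hc1 hc2
        refine hR.trans ?_
        have hd0 : (0:ℝ) ≤ (d:ℝ) := by positivity
        have h2 : (d:ℝ)^(e:ℕ) ≤ (2*(n:ℝ)^(0.6:ℝ))^(e:ℕ) := pow_le_pow_left₀ hd0 hd e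
        have hstep : (n:ℝ)^(i:ℕ) * (d:ℝ)^(e:ℕ)
            ≤ (n:ℝ)^(i:ℕ) * ((2:ℝ)^(e:ℕ) * ((n:ℝ)^(0.6:ℝ))^(e:ℕ)) := by
          rw [← mul_pow]
          exact mul_le_mul_of_nonneg_left h2 (by positivity)
        refine hstep.trans ?_
        have hrw : (n:ℝ)^(i:ℕ) * ((2:ℝ)^(e:ℕ) * ((n:ℝ)^(0.6:ℝ))^(e:ℕ))
            = (2:ℝ)^(e:ℕ) * (n:ℝ)^((i:ℝ) + 0.6*(e:ℝ)) := by
          rw [← Real.rpow_natCast ((n:ℝ)^(0.6:ℝ)) e, ← Real.rpow_mul hn0.le,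
            ← Real.rpow_natCast (n:ℝ) i, mul_comm ((2:ℝ)^(e:ℕ)) _, ← mul_assoc,
            ← Real.rpow_add hn0, mul_comm]
        rw [hrw]
        have hn1 : (1:ℝ) ≤ (n:ℝ) := by exact_mod_cast hn
        have hexp : (i:ℝ) + 0.6*(e:ℝ) ≤ 0.6*(ℓ:ℝ) := by
          have h' : 2*(i:ℝ) + (e:ℝ) = (ℓ:ℝ) := by exact_mod_cast hie
          nlinarith
        have h2e : (2:ℝ)^(e:ℕ) ≤ (2:ℝ)^(ℓ:ℕ) := pow_le_pow_right₀ (by norm_num) (by omega)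
        calc (2:ℝ)^(e:ℕ) * (n:ℝ)^((i:ℝ) + 0.6*(e:ℝ))
            ≤ (2:ℝ)^(e:ℕ) * (n:ℝ)^(0.6*(ℓ:ℝ)) :=
              mul_le_mul_of_nonneg_left (Real.rpow_le_rpow_of_exponent_le hn1 hexp) (by positivity)
          _ ≤ (2:ℝ)^(ℓ:ℕ) * (n:ℝ)^(0.6*(ℓ:ℝ)) :=
              mul_le_mul_of_nonneg_right h2e (by positivity)
      · rw [Nat.choose_eq_zero_of_lt (not_le.mp htd)]
        simpa using hpos.le
    · rw [Nat.choose_eq_zero_of_lt (not_le.mp hjm)]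
      simpa using hpos.le
  · rw [if_neg hv, zero_mul]
    simpa using hpos.le

lemma abs_coeff_prod_le (n ℓ m d : ℕ) (σ : ℤ) (hσ : σ = 1 ∨ σ = -1)
    (hnd : 2*m + d = n) (hℓ : ℓ ≤ n) (hn : 1 ≤ n) (hd : (d:ℝ) ≤ 2*(n:ℝ)^(0.6:ℝ)) :
    |(((((X:ℤ[X])^2 - 1)^m * (X + C σ)^d).coeff (n - ℓ) : ℤ) : ℝ)|
      ≤ ((n:ℝ)+1) * (2^ℓ * (n:ℝ)^(0.6*(ℓ:ℝ))) := by
  rw [Polynomial.coeff_mul]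
  push_cast
  refine (Finset.abs_sum_le_sum_abs _ _).trans ?_
  have hterm : ∀ q ∈ Finset.HasAntidiagonal.antidiagonal (n - ℓ),
      |((((X:ℤ[X])^2 - 1)^m).coeff q.1 : ℝ) * (((X + C σ)^d : ℤ[X]).coeff q.2 : ℝ)|
        ≤ 2^ℓ * (n:ℝ)^(0.6*(ℓ:ℝ)) := by
    intro q hq
    have hvt : q.1 + q.2 = n - ℓ := Finset.HasAntidiagonal.mem_antidiagonal.mp hq
    have b1 := abs_coeff_sq_sub_one_pow m q.1
    have b2 := abs_coeff_X_add_C_pow σ hσ d q.2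
    have hite : (0:ℤ) ≤ (if 2 ∣ q.1 then (m.choose (q.1/2) : ℤ) else 0) := by
      split <;> positivity
    have hmul : |(((X:ℤ[X])^2 - 1)^m).coeff q.1 * ((X + C σ)^d : ℤ[X]).coeff q.2|
        ≤ (if 2 ∣ q.1 then (m.choose (q.1/2) : ℤ) else 0) * (d.choose q.2 : ℤ) := by
      rw [abs_mul]
      exact mul_le_mul b1 b2 (abs_nonneg _) hite
    have := term_bound n ℓ m d hnd hℓ hn hd q.1 q.2 hvt
    calc |(((((X:ℤ[X])^2 - 1)^m).coeff q.1 : ℤ) : ℝ) * ((((X + C σ)^d : ℤ[X]).coeff q.2 : ℤ) : ℝ)|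
        = ((|(((X:ℤ[X])^2 - 1)^m).coeff q.1 * ((X + C σ)^d : ℤ[X]).coeff q.2| : ℤ) : ℝ) := by
          push_cast [Int.cast_abs]; rw [abs_mul]
      _ ≤ (((if 2 ∣ q.1 then (m.choose (q.1/2) : ℤ) else 0) * (d.choose q.2 : ℤ) : ℤ) : ℝ) := by
          exact_mod_cast hmul
      _ ≤ 2^ℓ * (n:ℝ)^(0.6*(ℓ:ℝ)) := this
  calc ∑ q ∈ Finset.HasAntidiagonal.antidiagonal (n - ℓ),
        |((((X:ℤ[X])^2 - 1)^m).coeff q.1 : ℝ) * (((X + C σ)^d : ℤ[X]).coeff q.2 : ℝ)|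
      ≤ (Finset.HasAntidiagonal.antidiagonal (n - ℓ)).card • (2^ℓ * (n:ℝ)^(0.6*(ℓ:ℝ))) :=
        Finset.sum_le_card_nsmul _ _ _ hterm
    _ = ((n - ℓ + 1 : ℕ) : ℝ) * (2^ℓ * (n:ℝ)^(0.6*(ℓ:ℝ))) := by
        rw [Finset.Nat.card_antidiagonal, nsmul_eq_mul]
    _ ≤ ((n:ℝ)+1) * (2^ℓ * (n:ℝ)^(0.6*(ℓ:ℝ))) := by
        have : ((n - ℓ + 1 : ℕ) : ℝ) ≤ (n:ℝ) + 1 := by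
          have : n - ℓ + 1 ≤ n + 1 := by omega
          exact_mod_cast this
        exact mul_le_mul_of_nonneg_right this (by positivity)

lemma key_bound {n : ℕ} (hn : 1 ≤ n) (p : Fin n → Prop) [DecidablePred p] (ℓ : ℕ)
    (hℓ : ℓ ≤ n) (b : ZMod 2)
    (hlow : (n:ℝ)/2 - (n:ℝ)^(0.6:ℝ) ≤ (((univ : Finset (Fin n)).filter p).card : ℝ))
    (hhigh : (((univ : Finset (Fin n)).filter p).card : ℝ) ≤ (n:ℝ)/2 + (n:ℝ)^(0.6:ℝ)) :
    2 * ((((Finset.powersetCard ℓ (univ : Finset (Fin n))).filter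
        (fun S => ((S.filter p).card : ZMod 2) = b)).card : ℝ))
      ≤ (n.choose ℓ : ℝ) + ((n:ℝ)+1) * (2^ℓ * (n:ℝ)^(0.6*(ℓ:ℝ))) := by
  set r := ((univ : Finset (Fin n)).filter p).card with hrdef
  have hrn : r ≤ n := le_trans (Finset.card_filter_le _ _) (by simp)
  have hsplit := parity_split p ℓ b
  have hDeq := D_eq p ℓ hℓ
  rw [← hrdef] at hDeq
  have habs : |((((X - 1)^r * (X + 1)^(n - r) : ℤ[X])).coeff (n - ℓ) : ℝ)|
      ≤ ((n:ℝ)+1) * (2^ℓ * (n:ℝ)^(0.6*(ℓ:ℝ))) := by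
    by_cases h2r : 2*r ≤ n
    · have heq : ((X - 1)^r * (X + 1)^(n - r) : ℤ[X])
          = ((X:ℤ[X])^2 - 1)^r * (X + C (1:ℤ))^(n - 2*r) := by
        rw [show n - r = r + (n - 2*r) from by omega, pow_add, ← mul_assoc, ← mul_pow,
          show ((X:ℤ[X]) - 1) * (X + 1) = X^2 - 1 from by ring,
          show (X + C (1:ℤ)) = X + 1 from by simp]
      rw [heq]
      apply abs_coeff_prod_le n ℓ r (n - 2*r) 1 (Or.inl rfl) (by omega) hℓ hn
      have : ((n - 2*r : ℕ) : ℝ) = (n:ℝ) - 2*(r:ℝ) := by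
        push_cast [Nat.cast_sub h2r]; ring
      rw [this]; linarith
    · have heq : ((X - 1)^r * (X + 1)^(n - r) : ℤ[X])
          = ((X:ℤ[X])^2 - 1)^(n - r) * (X + C (-1:ℤ))^(2*r - n) := by
        have h1 : (X - 1 : ℤ[X])^r = (X-1)^(n-r) * (X-1)^(2*r-n) := by
          rw [← pow_add]; congr 1; omega
        rw [h1, show (X + C (-1:ℤ)) = X - 1 from by simp [sub_eq_add_neg],
          mul_right_comm, ← mul_pow,
          show ((X:ℤ[X]) - 1) * (X + 1) = X^2 - 1 from by ring]
      rw [heq]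
      apply abs_coeff_prod_le n ℓ (n - r) (2*r - n) (-1) (Or.inr rfl) (by omega) hℓ hn
      have : ((2*r - n : ℕ) : ℝ) = 2*(r:ℝ) - (n:ℝ) := by
        push_cast [Nat.cast_sub (by omega : n ≤ 2*r)]; ring
      rw [this]; linarith
  rw [hDeq] at hsplit
  have hsplitR : 2 * ((((Finset.powersetCard ℓ (univ : Finset (Fin n))).filter
        (fun S => ((S.filter p).card : ZMod 2) = b)).card : ℝ))
      ≤ (n.choose ℓ : ℝ) + |((((X - 1)^r * (X + 1)^(n - r) : ℤ[X])).coeff (n - ℓ) : ℝ)| := by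
    have := hsplit
    push_cast [Int.cast_abs] at this ⊢
    exact_mod_cast this
  linarith

lemma dot_eq {n : ℕ} (a s : Fin n → ZMod 2) :
    ∑ i, a i * s i
      = ((((Finset.univ.filter (fun i => s i = 1)).filter (fun i => a i = 1)).card : ZMod 2)) := by
  rw [Finset.filter_filter, Finset.card_filter]
  push_cast
  apply Finset.sum_congr rfl
  intro i _
  rcases zmod2_cases (a i) with h1 | h1 <;> rcases zmod2_cases (s i) with h2 | h2 <;>
    simp [h1, h2] <;> decide

lemma count_eq {n : ℕ} (a : Fin n → ZMod 2) (ℓ : ℕ) (b : ZMod 2) :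
    ((Finset.univ.filter (fun s : Fin n → ZMod 2 =>
        (Finset.univ.filter (fun i => s i = 1)).card = ℓ)).filter
      (fun s => ∑ i, a i * s i = b)).card
    = ((Finset.powersetCard ℓ (univ : Finset (Fin n))).filter
        (fun S => ((S.filter (fun i => a i = 1)).card : ZMod 2) = b)).card := by
  rw [Finset.card_filter, Finset.card_filter]
  rw [Finset.sum_congr rfl (fun s _ => by rw [dot_eq a s] :
    ∀ s ∈ Finset.univ.filter (fun s : Fin n → ZMod 2 =>
        (Finset.univ.filter (fun i => s i = 1)).card = ℓ),
      (if ∑ i, a i * s i = b then 1 else 0)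
      = (fun S : Finset (Fin n) =>
          if ((S.filter (fun i => a i = 1)).card : ZMod 2) = b then 1 else 0)
        (Finset.univ.filter (fun i => s i = 1)))]
  exact sum_weight n ℓ (fun S : Finset (Fin n) => if ((S.filter (fun i => a i = 1)).card : ZMod 2) = b then (1:ℕ) else 0)

lemma total_eq (n ℓ : ℕ) :
    (Finset.univ.filter (fun s : Fin n → ZMod 2 =>
        (Finset.univ.filter (fun i => s i = 1)).card = ℓ)).card = n.choose ℓ := by
  have h := sum_weight n ℓ (fun _ : Finset (Fin n) => (1:ℕ))
  rw [Finset.card_eq_sum_ones, h, ← Finset.card_eq_sum_ones, Finset.card_powersetCard,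
    Finset.card_univ, Fintype.card_fin]

lemma choose_lower (n ℓ : ℕ) : (n + 1 - ℓ)^ℓ ≤ ℓ^ℓ * n.choose ℓ := by
  calc (n+1-ℓ)^ℓ ≤ n.descFactorial ℓ := Nat.pow_sub_le_descFactorial n ℓ
    _ = ℓ.factorial * n.choose ℓ := Nat.descFactorial_eq_factorial_mul_choose n ℓ
    _ ≤ ℓ^ℓ * n.choose ℓ := Nat.mul_le_mul_right _ (Nat.factorial_le_pow ℓ)

set_option maxHeartbeats 1000000 in
/-- For any constant `c > 0` there is a negligible function `negl` such that for
every `n`, every `(1/n^{0.4})`-biased string `a ∈ F_2^n` (i.e. with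
`n/2 - n^{0.6} ≤ #{i : a_i = 1} ≤ n/2 + n^{0.6}`), and every bit `b`, a
uniformly random `s` of Hamming weight `⌈c log n⌉` satisfies
`Pr[a · s = b] ≤ 1/2 + negl(n)`. -/
theorem biased_dot_sparse (c : ℝ) (hc : 0 < c) :
    ∃ negl : ℕ → ℝ,
      (∀ k : ℕ, ∃ N : ℕ, ∀ n, N ≤ n → |negl n| ≤ ((n : ℝ))⁻¹ ^ k) ∧
      ∀ (n : ℕ) (a : Fin n → ZMod 2) (b : ZMod 2),
        (n : ℝ)/2 - (n : ℝ) ^ (0.6 : ℝ)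
            ≤ ((Finset.univ.filter (fun i => a i = 1)).card : ℝ) →
        ((Finset.univ.filter (fun i => a i = 1)).card : ℝ)
            ≤ (n : ℝ)/2 + (n : ℝ) ^ (0.6 : ℝ) →
        (((Finset.univ.filter (fun s : Fin n → ZMod 2 =>
              (Finset.univ.filter (fun i => s i = 1)).card = ⌈c * Real.log n⌉₊)).filter
            (fun s => ∑ i, a i * s i = b)).card : ℝ)
          / ((Finset.univ.filter (fun s : Fin n → ZMod 2 =>
              (Finset.univ.filter (fun i => s i = 1)).card = ⌈c * Real.log n⌉₊)).card : ℝ)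
          ≤ 1/2 + negl n := by
  refine ⟨fun n => ((n:ℝ)+1) * (2^(⌈c * Real.log n⌉₊) * (n:ℝ)^(0.6*((⌈c * Real.log n⌉₊ : ℕ):ℝ)))
      * ((⌈c * Real.log n⌉₊ : ℕ):ℝ)^(⌈c * Real.log n⌉₊)
      / (2 * (((n + 1 - ⌈c * Real.log n⌉₊ : ℕ)):ℝ)^(⌈c * Real.log n⌉₊)), ?_, ?_⟩
  · intro k
    have t1 : Filter.Tendsto (fun n : ℕ => Real.log n) Filter.atTop Filter.atTop :=
      Real.tendsto_log_atTop.comp tendsto_natCast_atTop_atTop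
    have e1 : ∀ᶠ n : ℕ in Filter.atTop, ((k:ℝ)+2)/(0.3*c) ≤ Real.log n :=
      t1.eventually_ge_atTop _
    have t2 : Filter.Tendsto (fun n : ℕ => (n:ℝ)^(0.05:ℝ)) Filter.atTop Filter.atTop :=
      (tendsto_rpow_atTop (by norm_num)).comp tendsto_natCast_atTop_atTop
    have e2 : ∀ᶠ n : ℕ in Filter.atTop, 80*c+4 ≤ (n:ℝ)^(0.05:ℝ) := t2.eventually_ge_atTop _
    have t3 : Filter.Tendsto (fun n : ℕ => (n:ℝ)^(0.5:ℝ)) Filter.atTop Filter.atTop :=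
      (tendsto_rpow_atTop (by norm_num)).comp tendsto_natCast_atTop_atTop
    have e3 : ∀ᶠ n : ℕ in Filter.atTop, 4*c+2 ≤ (n:ℝ)^(0.5:ℝ) := t3.eventually_ge_atTop _
    have e4 : ∀ᶠ n : ℕ in Filter.atTop, 2 ≤ n := Filter.eventually_ge_atTop 2
    obtain ⟨N, hN⟩ := Filter.eventually_atTop.mp (((e1.and e2).and e3).and e4)
    refine ⟨N, fun n hn => ?_⟩
    obtain ⟨⟨⟨h1, h2⟩, h3⟩, h4⟩ := hN n hn
    beta_reduce
    set ℓ := ⌈c * Real.log n⌉₊ with hℓdef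
    set x := (n:ℝ) with hxdef
    have hx2 : (2:ℝ) ≤ x := by rw [hxdef]; exact_mod_cast h4
    have hx0 : (0:ℝ) < x := by linarith
    have hx1 : (1:ℝ) ≤ x := by linarith
    have hL0 : 0 ≤ Real.log x := Real.log_nonneg hx1
    have hA : c * Real.log x ≤ (ℓ:ℝ) := Nat.le_ceil _
    have hB : (ℓ:ℝ) ≤ c * Real.log x + 1 :=
      le_of_lt (Nat.ceil_lt_add_one (mul_nonneg hc.le hL0))
    have hk2 : (k:ℝ) + 2 ≤ 0.3 * (ℓ:ℝ) := by
      have hd := (div_le_iff₀ (by positivity : (0:ℝ) < 0.3*c)).mp h1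
      nlinarith
    have hr05 : (1:ℝ) ≤ x^(0.05:ℝ) := Real.one_le_rpow hx1 (by norm_num)
    have hr5 : (1:ℝ) ≤ x^(0.5:ℝ) := Real.one_le_rpow hx1 (by norm_num)
    have hld1 := Real.log_le_rpow_div hx0.le (show (0:ℝ) < 0.05 by norm_num)
    have hld2 := Real.log_le_rpow_div hx0.le (show (0:ℝ) < 0.5 by norm_num)
    have hlogle : Real.log x ≤ 20 * x^(0.05:ℝ) := by
      have : x^(0.05:ℝ)/0.05 = 20 * x^(0.05:ℝ) := by ring
      linarith
    have hlogle2 : Real.log x ≤ 2 * x^(0.5:ℝ) := by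
      have : x^(0.5:ℝ)/0.5 = 2 * x^(0.5:ℝ) := by ring
      linarith
    have hxx : x^(0.05:ℝ)*x^(0.05:ℝ) = x^(0.1:ℝ) := by
      rw [← Real.rpow_add hx0]; norm_num
    have hxx2 : x^(0.5:ℝ)*x^(0.5:ℝ) = x := by
      rw [← Real.rpow_add hx0, show (0.5+0.5:ℝ) = 1 by norm_num, Real.rpow_one]
    have h4l : 4*(ℓ:ℝ) ≤ x^(0.1:ℝ) := by
      have hm1 : (4*c) * Real.log x ≤ (4*c) * (20 * x^(0.05:ℝ)) :=
        mul_le_mul_of_nonneg_left hlogle (by positivity)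
      have hm2 : (80*c+4) * x^(0.05:ℝ) ≤ x^(0.05:ℝ) * x^(0.05:ℝ) :=
        mul_le_mul_of_nonneg_right h2 (by positivity)
      nlinarith
    have h2l : 2*(ℓ:ℝ) ≤ x := by
      have hm1 : (2*c) * Real.log x ≤ (2*c) * (2 * x^(0.5:ℝ)) :=
        mul_le_mul_of_nonneg_left hlogle2 (by positivity)
      have hm2 : (4*c+2) * x^(0.5:ℝ) ≤ x^(0.5:ℝ) * x^(0.5:ℝ) :=
        mul_le_mul_of_nonneg_right h3 (by positivity)
      nlinarith
    have hℓn : ℓ ≤ n := by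
      have : (ℓ:ℝ) ≤ (n:ℝ) := by rw [← hxdef]; linarith
      exact_mod_cast this
    have hcast : ((n + 1 - ℓ : ℕ):ℝ) = x + 1 - (ℓ:ℝ) := by
      rw [Nat.cast_sub (by omega : ℓ ≤ n+1)]; push_cast; rw [← hxdef]
    have hden_ge : (x/2)^ℓ ≤ ((n + 1 - ℓ : ℕ):ℝ)^ℓ := by
      rw [hcast]
      apply pow_le_pow_left₀ (by positivity)
      linarith
    rw [abs_of_nonneg (by positivity)]
    have step1 : (x+1) * (2^ℓ * x^(0.6*(ℓ:ℝ))) * (ℓ:ℝ)^ℓ / (2 * ((n + 1 - ℓ : ℕ):ℝ)^ℓ)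
        ≤ (x+1) * (2^ℓ * x^(0.6*(ℓ:ℝ))) * (ℓ:ℝ)^ℓ / (2 * (x/2)^ℓ) := by
      gcongr
    refine le_trans step1 ?_
    have hmulpow : (2:ℝ)^ℓ * 2^ℓ * (ℓ:ℝ)^ℓ = ((4:ℝ)*(ℓ:ℝ))^ℓ := by
      rw [← mul_pow, ← mul_pow]; norm_num
    have h4lp : ((4:ℝ)*(ℓ:ℝ))^ℓ ≤ x^(0.1*(ℓ:ℝ)) := by
      calc ((4:ℝ)*(ℓ:ℝ))^ℓ ≤ (x^(0.1:ℝ))^ℓ := pow_le_pow_left₀ (by positivity) h4l ℓ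
        _ = x^(0.1*(ℓ:ℝ)) := by
            rw [← Real.rpow_natCast (x^(0.1:ℝ)) ℓ, ← Real.rpow_mul hx0.le]
    have hx1p : x+1 ≤ x^((2:ℝ)) := by
      rw [show ((2:ℝ)) = ((2:ℕ):ℝ) by norm_num, Real.rpow_natCast]
      nlinarith
    have hxk : x^(k:ℕ) = x^((k:ℝ)) := (Real.rpow_natCast x k).symm
    have H : (x+1) * (2^ℓ * x^(0.6*(ℓ:ℝ))) * (ℓ:ℝ)^ℓ * x^(k:ℕ) * 2^ℓ ≤ 2 * x^ℓ := by
      calc (x+1) * (2^ℓ * x^(0.6*(ℓ:ℝ))) * (ℓ:ℝ)^ℓ * x^(k:ℕ) * 2^ℓ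
          = (x+1) * (((2:ℝ)^ℓ * 2^ℓ * (ℓ:ℝ)^ℓ)) * x^(0.6*(ℓ:ℝ)) * x^((k:ℝ)) := by
            rw [← hxk]; ring
        _ = (x+1) * ((4:ℝ)*(ℓ:ℝ))^ℓ * x^(0.6*(ℓ:ℝ)) * x^((k:ℝ)) := by rw [hmulpow]
        _ ≤ x^((2:ℝ)) * x^(0.1*(ℓ:ℝ)) * x^(0.6*(ℓ:ℝ)) * x^((k:ℝ)) := by
            have P1 : (x+1) * ((4:ℝ)*(ℓ:ℝ))^ℓ ≤ x^((2:ℝ)) * x^(0.1*(ℓ:ℝ)) :=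
              mul_le_mul hx1p h4lp (by positivity) (by positivity)
            exact mul_le_mul_of_nonneg_right
              (mul_le_mul_of_nonneg_right P1 (by positivity)) (by positivity)
        _ = x^((2:ℝ) + 0.1*(ℓ:ℝ) + 0.6*(ℓ:ℝ) + (k:ℝ)) := by
            rw [← Real.rpow_add hx0, ← Real.rpow_add hx0, ← Real.rpow_add hx0]
        _ ≤ x^((ℓ:ℝ)) := Real.rpow_le_rpow_of_exponent_le hx1 (by linarith)
        _ = x^ℓ := Real.rpow_natCast x ℓ
        _ ≤ 2 * x^ℓ := by nlinarith [pow_nonneg hx0.le ℓ]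
    rw [inv_pow, inv_eq_one_div, div_le_div_iff₀ (by positivity) (by positivity), one_mul,
      div_pow, show (2:ℝ)*((x^ℓ)/(2^ℓ)) = (2*x^ℓ)/(2^ℓ) by ring,
      le_div_iff₀ (by positivity)]
    exact H
  · intro n a b hlow hhigh
    set ℓ := ⌈c * Real.log n⌉₊ with hℓdef
    by_cases hn0 : n = 0
    · subst hn0
      have hℓ0 : ℓ = 0 := by simp [hℓdef, Real.log_zero]
      have hden : (Finset.univ.filter (fun s : Fin 0 → ZMod 2 =>
          (Finset.univ.filter (fun i => s i = 1)).card = ℓ)).card = 1 := by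
        rw [total_eq 0 ℓ, hℓ0]; rfl
      have hnum := Finset.card_filter_le (Finset.univ.filter (fun s : Fin 0 → ZMod 2 =>
          (Finset.univ.filter (fun i => s i = 1)).card = ℓ)) (fun s => ∑ i, a i * s i = b)
      rw [hden] at hnum
      rw [hden, Nat.cast_one, div_one]
      have h1 : ((((Finset.univ.filter (fun s : Fin 0 → ZMod 2 =>
          (Finset.univ.filter (fun i => s i = 1)).card = ℓ)).filter
            (fun s => ∑ i, a i * s i = b)).card : ℝ)) ≤ 1 := by exact_mod_cast hnum
      refine h1.trans ?_
      beta_reduce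
      norm_num [Real.log_zero, Real.rpow_zero]
    · have hn : 1 ≤ n := by omega
      by_cases hℓn : ℓ ≤ n
      · have hkey := key_bound hn (fun i => a i = 1) ℓ hℓn b hlow hhigh
        rw [count_eq a ℓ b, total_eq n ℓ]
        set Nb := ((Finset.powersetCard ℓ (univ : Finset (Fin n))).filter
            (fun S => ((S.filter (fun i => a i = 1)).card : ZMod 2) = b)).card with hNb
        set C := (n.choose ℓ : ℝ) with hC
        set E := ((n:ℝ)+1) * (2^ℓ * (n:ℝ)^(0.6*(ℓ:ℝ))) with hE
        set Λ := ((ℓ:ℕ):ℝ)^ℓ with hΛ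
        set P := (((n + 1 - ℓ : ℕ)):ℝ)^ℓ with hP
        have hCpos : (0:ℝ) < C := by
          rw [hC]; exact_mod_cast Nat.choose_pos hℓn
        have hPpos : (0:ℝ) < P := by
          rw [hP]
          have : (1:ℕ) ≤ n + 1 - ℓ := by omega
          positivity
        have hPC : P ≤ Λ * C := by
          rw [hP, hΛ, hC]
          exact_mod_cast choose_lower n ℓ
        have hE0 : (0:ℝ) ≤ E := by rw [hE]; positivity
        rw [div_le_iff₀ hCpos]
        have h2 : E/2 ≤ E*Λ/(2*P) * C := by
          rw [div_mul_eq_mul_div, div_le_div_iff₀ two_pos (by positivity)]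
          nlinarith [hE0, hPC]
        have expand : (1/2 + E * Λ / (2*P)) * C = C/2 + (E*Λ/(2*P))*C := by ring
        have hgoal : (Nb:ℝ) ≤ (1/2 + E * Λ / (2*P)) * C := by
          rw [expand]; linarith
        calc (Nb:ℝ) ≤ (1/2 + E * Λ / (2*P)) * C := hgoal
          _ = (1/2 + E * Λ / (2*P)) * C := rfl
      · have hW : (Finset.univ.filter (fun s : Fin n → ZMod 2 =>
            (Finset.univ.filter (fun i => s i = 1)).card = ℓ)) = ∅ := by
          apply Finset.filter_false_of_mem
          intro s _
          have : (Finset.univ.filter (fun i => s i = 1)).card ≤ n :=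
            le_trans (Finset.card_filter_le _ _) (by simp)
          omega
        rw [hW]
        simp only [Finset.filter_empty, Finset.card_empty, Nat.cast_zero, zero_div]
        positivity
end
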